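/- Let J be a nonempty closed convex subset of a uniformly convex Banach space G and S : J → J a nonexpansive mapping whose fixed point set F(S) is nonempty. Suppose S satisfies condition (A): there exists a nondecreasing function g : [0,∞) → [0,∞) with g(0) = 0 and g(r) > 0 for all r > 0 such that ‖u − Su‖ ≥ g(d(u, F(S))) for all u ∈ J. Let {δₙ} satisfy 0 < w ≤ δₙ ≤ v < 1 for some constants w, v, and let {cₙ} be generated by the iteration (1.2). Then {cₙ} converges strongly to a fixed point of S. -/
import Mathlib


open Filter Metric

lemma comb_bound {G : Type*} [NormedAddCommGroup G] [NormedSpace ℝ G]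
    (x y : G) (r t d : ℝ) (hx : ‖x‖ ≤ r) (hy : ‖y‖ ≤ r)
    (hxy : ‖x + y‖ ≤ 2 * r - d) (ht0 : 0 ≤ t) (ht1 : t ≤ 1) :
    ‖(1 - t) • x + t • y‖ ≤ r - min t (1 - t) * d := by
  rcases le_total t (1 / 2) with h | h
  · have he : (1 - t) • x + t • y = (1 - 2 * t) • x + t • (x + y) := by module
    have hmin : min t (1 - t) = t := min_eq_left (by linarith)
    rw [he, hmin]
    calc ‖(1 - 2 * t) • x + t • (x + y)‖ ≤ ‖(1 - 2 * t) • x‖ + ‖t • (x + y)‖ := norm_add_le _ _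
      _ = (1 - 2 * t) * ‖x‖ + t * ‖x + y‖ := by
          rw [norm_smul, norm_smul, Real.norm_of_nonneg (by linarith), Real.norm_of_nonneg ht0]
      _ ≤ (1 - 2 * t) * r + t * (2 * r - d) := by gcongr <;> linarith
      _ = r - t * d := by ring
  · have he : (1 - t) • x + t • y = (2 * t - 1) • y + (1 - t) • (x + y) := by module
    have hmin : min t (1 - t) = 1 - t := min_eq_right (by linarith)
    rw [he, hmin]
    calc ‖(2 * t - 1) • y + (1 - t) • (x + y)‖ ≤ ‖(2 * t - 1) • y‖ + ‖(1 - t) • (x + y)‖ :=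
          norm_add_le _ _
      _ = (2 * t - 1) * ‖y‖ + (1 - t) * ‖x + y‖ := by
          rw [norm_smul, norm_smul, Real.norm_of_nonneg (by linarith),
            Real.norm_of_nonneg (by linarith)]
      _ ≤ (2 * t - 1) * r + (1 - t) * (2 * r - d) := by gcongr <;> linarith
      _ = r - (1 - t) * d := by ring

set_option maxHeartbeats 2000000 in
/-- if the nonexpansive map `S` satisfies condition (A) of Senter–Dotson,
then the iteration (1.2) converges strongly to a fixed point of `S`. -/
theorem stmt_10 {G : Type*} [NormedAddCommGroup G] [NormedSpace ℝ G] [CompleteSpace G]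
    [UniformConvexSpace G]
    (J : Set G) (hJne : J.Nonempty) (hJcl : IsClosed J) (hJconv : Convex ℝ J)
    (S : G → G) (hSJ : ∀ x ∈ J, S x ∈ J)
    (hS : ∀ u ∈ J, ∀ v ∈ J, ‖S u - S v‖ ≤ ‖u - v‖)
    (hFne : ∃ q ∈ J, S q = q)
    (g : ℝ → ℝ) (hg_mono : MonotoneOn g (Set.Ici 0)) (hg0 : g 0 = 0)
    (hg_pos : ∀ r : ℝ, 0 < r → 0 < g r)
    (hcondA : ∀ u ∈ J, g (Metric.infDist u {q | q ∈ J ∧ S q = q}) ≤ ‖u - S u‖)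
    (δ : ℕ → ℝ) (w v : ℝ) (hw : 0 < w) (hv : v < 1)
    (hδ : ∀ n, w ≤ δ n ∧ δ n ≤ v)
    (a b c : ℕ → G) (hc1 : c 1 ∈ J)
    (ha : ∀ n, 1 ≤ n → a n = S (c n))
    (hb : ∀ n, 1 ≤ n → b n = (1 - δ n) • a n + δ n • S (a n))
    (hc : ∀ n, 1 ≤ n → c (n + 1) = S (b n)) :
    ∃ q, q ∈ J ∧ S q = q ∧ Tendsto c atTop (nhds q) := by
  set F : Set G := {q | q ∈ J ∧ S q = q} with hF
  obtain ⟨q₀, hq₀J, hq₀fix⟩ := hFne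
  have hFne' : F.Nonempty := ⟨q₀, hq₀J, hq₀fix⟩
  have hδ0 : ∀ n, 0 ≤ δ n := fun n => (hw.le.trans (hδ n).1)
  have hδ1 : ∀ n, δ n ≤ 1 := fun n => ((hδ n).2.trans hv.le)
  -- memberships
  have hmemc : ∀ n, 1 ≤ n → c n ∈ J := by
    intro n hn
    induction n, hn using Nat.le_induction with
    | base => exact hc1
    | succ n hn ih =>
      rw [hc n hn]
      apply hSJ
      rw [hb n hn]
      have haJ : a n ∈ J := by rw [ha n hn]; exact hSJ _ ih
      exact hJconv haJ (hSJ _ haJ) (by linarith [hδ1 n]) (hδ0 n) (by ring)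
  have hmema : ∀ n, 1 ≤ n → a n ∈ J := fun n hn => by
    rw [ha n hn]; exact hSJ _ (hmemc n hn)
  have hmemb : ∀ n, 1 ≤ n → b n ∈ J := fun n hn => by
    rw [hb n hn]
    exact hJconv (hmema n hn) (hSJ _ (hmema n hn)) (by linarith [hδ1 n]) (hδ0 n) (by ring)
  -- nonexpansive towards fixed points
  have hSfix : ∀ u ∈ J, ∀ q ∈ F, ‖S u - q‖ ≤ ‖u - q‖ := by
    intro u hu q hq
    have := hS u hu q hq.1
    rwa [hq.2] at this
  -- decrease chains
  have hca : ∀ q ∈ F, ∀ n, 1 ≤ n → ‖a n - q‖ ≤ ‖c n - q‖ := by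
    intro q hq n hn; rw [ha n hn]; exact hSfix _ (hmemc n hn) q hq
  have hba : ∀ q ∈ F, ∀ n, 1 ≤ n → ‖b n - q‖ ≤ ‖a n - q‖ := by
    intro q hq n hn
    have hkey : b n - q = (1 - δ n) • (a n - q) + δ n • (S (a n) - q) := by
      rw [hb n hn]; module
    calc ‖b n - q‖ = ‖(1 - δ n) • (a n - q) + δ n • (S (a n) - q)‖ := by rw [hkey]
      _ ≤ ‖(1 - δ n) • (a n - q)‖ + ‖δ n • (S (a n) - q)‖ := norm_add_le _ _
      _ = (1 - δ n) * ‖a n - q‖ + δ n * ‖S (a n) - q‖ := by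
          rw [norm_smul, norm_smul, Real.norm_of_nonneg (by linarith [hδ1 n]),
            Real.norm_of_nonneg (hδ0 n)]
      _ ≤ (1 - δ n) * ‖a n - q‖ + δ n * ‖a n - q‖ := by
          nlinarith [hSfix _ (hmema n hn) q hq, hδ0 n]
      _ = ‖a n - q‖ := by ring
  have hcb : ∀ q ∈ F, ∀ n, 1 ≤ n → ‖c (n + 1) - q‖ ≤ ‖b n - q‖ := by
    intro q hq n hn; rw [hc n hn]; exact hSfix _ (hmemb n hn) q hq
  have hdec : ∀ q ∈ F, ∀ n, 1 ≤ n → ‖c (n + 1) - q‖ ≤ ‖c n - q‖ := fun q hq n hn =>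
    ((hcb q hq n hn).trans (hba q hq n hn)).trans (hca q hq n hn)
  have hmono : ∀ q ∈ F, ∀ n m, 1 ≤ n → n ≤ m → ‖c m - q‖ ≤ ‖c n - q‖ := by
    intro q hq n m hn hnm
    induction m, hnm using Nat.le_induction with
    | base => exact le_refl _
    | succ m hm ih => exact (hdec q hq m (hn.trans hm)).trans ih
  -- residual bound
  have hres : ∀ n, 1 ≤ n → ‖c (n + 1) - S (c (n + 1))‖ ≤ 3 * ‖a n - S (a n)‖ := by
    intro n hn
    have hbna : ‖b n - a n‖ ≤ ‖a n - S (a n)‖ := by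
      have : b n - a n = δ n • (S (a n) - a n) := by rw [hb n hn]; module
      rw [this, norm_smul, Real.norm_of_nonneg (hδ0 n), norm_sub_rev]
      nlinarith [norm_nonneg (a n - S (a n)), hδ1 n, hδ0 n]
    have h1 : ‖c (n + 1) - S (c (n + 1))‖ ≤ ‖b n - S (b n)‖ := by
      rw [hc n hn]; exact hS _ (hmemb n hn) _ (hSJ _ (hmemb n hn))
    have h2 : ‖S (a n) - S (b n)‖ ≤ ‖a n - b n‖ := hS _ (hmema n hn) _ (hmemb n hn)
    have h3 : ‖b n - S (b n)‖ ≤ ‖b n - a n‖ + ‖a n - S (a n)‖ + ‖S (a n) - S (b n)‖ := by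
      have : b n - S (b n) = (b n - a n) + (a n - S (a n)) + (S (a n) - S (b n)) := by abel
      rw [this]; exact norm_add₃_le
    rw [norm_sub_rev (a n) (b n)] at h2
    linarith
  -- infDist goes below any positive threshold
  have hDto0 : ∀ η : ℝ, 0 < η → ∃ N, 1 ≤ N ∧ Metric.infDist (c N) F < η := by
    intro η hη
    by_contra hcon
    push_neg at hcon
    set β := g η with hβdef
    have hβ : 0 < β := hg_pos η hη
    have hlow : ∀ n, 1 ≤ n → β ≤ ‖c n - S (c n)‖ := by
      intro n hn
      refine le_trans ?_ (hcondA (c n) (hmemc n hn))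
      exact hg_mono (Set.mem_Ici.2 hη.le) (Set.mem_Ici.2 Metric.infDist_nonneg) (hcon n hn)
    have halow : ∀ n, 1 ≤ n → β / 3 ≤ ‖a n - S (a n)‖ := by
      intro n hn
      have h1 := hlow (n + 1) (by omega)
      have h2 := hres n hn
      linarith
    set ε := β / 3 with hεdef
    have hεpos : 0 < ε := by positivity
    set R := ‖c 1 - q₀‖ with hRdef
    have hq₀F : q₀ ∈ F := ⟨hq₀J, hq₀fix⟩
    have hrlow : ∀ n, 1 ≤ n → ε / 2 ≤ ‖c n - q₀‖ := by
      intro n hn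
      have h1 := halow n hn
      have h2 : ‖S (a n) - q₀‖ ≤ ‖a n - q₀‖ := hSfix _ (hmema n hn) q₀ hq₀F
      have h3 : ‖a n - S (a n)‖ ≤ ‖a n - q₀‖ + ‖S (a n) - q₀‖ := by
        have : a n - S (a n) = (a n - q₀) - (S (a n) - q₀) := by abel
        rw [this]; exact norm_sub_le _ _
      have h4 := hca q₀ hq₀F n hn
      linarith
    have hRpos : 0 < R := lt_of_lt_of_le (by positivity) (hrlow 1 le_rfl)
    obtain ⟨d', hd'pos, hd'⟩ :=
      exists_forall_closed_ball_dist_add_le_two_sub G (div_pos hεpos hRpos)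
    set κ := min w (1 - v) * (ε / 2 * d') with hκdef
    have hm : 0 < min w (1 - v) := lt_min hw (by linarith)
    have hκpos : 0 < κ := by positivity
    have hstep : ∀ n, 1 ≤ n → ‖c (n + 1) - q₀‖ ≤ ‖c n - q₀‖ - κ := by
      intro n hn
      set ρ := ‖c n - q₀‖ with hρdef
      have hρpos : 0 < ρ := lt_of_lt_of_le (by positivity) (hrlow n hn)
      have hρR : ρ ≤ R := hmono q₀ hq₀F 1 n le_rfl hn
      set x := a n - q₀ with hxdef
      set y := S (a n) - q₀ with hydef
      have hx : ‖x‖ ≤ ρ := hca q₀ hq₀F n hn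
      have hy : ‖y‖ ≤ ρ := (hSfix _ (hmema n hn) q₀ hq₀F).trans hx
      have hxynorm : ε ≤ ‖x - y‖ := by
        have : x - y = a n - S (a n) := by rw [hxdef, hydef]; abel
        rw [this]; exact halow n hn
      have hx' : ‖ρ⁻¹ • x‖ ≤ 1 := by
        rw [norm_smul, Real.norm_of_nonneg (by positivity), ← div_eq_inv_mul]
        exact div_le_one_of_le₀ hx hρpos.le
      have hy' : ‖ρ⁻¹ • y‖ ≤ 1 := by
        rw [norm_smul, Real.norm_of_nonneg (by positivity), ← div_eq_inv_mul]
        exact div_le_one_of_le₀ hy hρpos.le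
      have hxy' : ε / R ≤ ‖ρ⁻¹ • x - ρ⁻¹ • y‖ := by
        rw [← smul_sub, norm_smul, Real.norm_of_nonneg (by positivity), ← div_eq_inv_mul]
        calc ε / R ≤ ε / ρ := by gcongr
          _ ≤ ‖x - y‖ / ρ := by gcongr
      have happ := hd' hx' hy' hxy'
      have hsum : ‖x + y‖ ≤ 2 * ρ - ε / 2 * d' := by
        have h1 : ρ⁻¹ • x + ρ⁻¹ • y = ρ⁻¹ • (x + y) := (smul_add _ _ _).symm
        rw [h1, norm_smul, Real.norm_of_nonneg (by positivity), ← div_eq_inv_mul,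
          div_le_iff₀ hρpos] at happ
        have h2 := hrlow n hn
        nlinarith
      have hcomb := comb_bound x y ρ (δ n) (ε / 2 * d') hx hy hsum (hδ0 n) (hδ1 n)
      have hbq : b n - q₀ = (1 - δ n) • x + δ n • y := by
        rw [hb n hn, hxdef, hydef]; module
      have hminle : min w (1 - v) ≤ min (δ n) (1 - δ n) :=
        min_le_min (hδ n).1 (by linarith [(hδ n).2])
      have hbbound : ‖b n - q₀‖ ≤ ρ - κ := by
        rw [hbq]
        refine hcomb.trans ?_
        have hpos : 0 < ε / 2 * d' := by positivity
        rw [hκdef]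
        nlinarith
      exact (hcb q₀ hq₀F n hn).trans hbbound
    -- linear descent gives a contradiction
    have hlin : ∀ k : ℕ, ‖c (k + 1) - q₀‖ ≤ R - k * κ := by
      intro k
      induction k with
      | zero => simp [hRdef]
      | succ k ih =>
        have h1 := hstep (k + 1) (by omega)
        push_cast
        push_cast at ih
        linarith
    obtain ⟨k, hk⟩ := exists_nat_gt (R / κ)
    have h1 := hlin k
    have h2 : R / κ < k := hk
    rw [div_lt_iff₀ hκpos] at h2
    linarith [norm_nonneg (c (k + 1) - q₀)]
  -- monotonicity of infDist along the iteration
  have hDmono : ∀ n m, 1 ≤ n → n ≤ m → Metric.infDist (c m) F ≤ Metric.infDist (c n) F := by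
    intro n m hn hnm
    by_contra hcon
    push_neg at hcon
    obtain ⟨q, hqF, hqd⟩ := (Metric.infDist_lt_iff hFne').1 hcon
    have h1 : Metric.infDist (c m) F ≤ dist (c m) q := Metric.infDist_le_dist_of_mem hqF
    have h2 : dist (c m) q ≤ dist (c n) q := by
      rw [dist_eq_norm, dist_eq_norm]; exact hmono q hqF n m hn hnm
    linarith
  -- Cauchy
  have hCauchy : CauchySeq (fun n => c (n + 1)) := by
    rw [Metric.cauchySeq_iff']
    intro ε hε
    obtain ⟨N, hN1, hNd⟩ := hDto0 (ε / 4) (by positivity)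
    obtain ⟨q, hqF, hqd⟩ := (Metric.infDist_lt_iff hFne').1 hNd
    refine ⟨N, fun n hn => ?_⟩
    have h1 : dist (c (n + 1)) q ≤ dist (c N) q := by
      rw [dist_eq_norm, dist_eq_norm]; exact hmono q hqF N (n + 1) hN1 (by omega)
    have h2 : dist (c (N + 1)) q ≤ dist (c N) q := by
      rw [dist_eq_norm, dist_eq_norm]; exact hmono q hqF N (N + 1) hN1 (by omega)
    calc dist (c (n + 1)) (c (N + 1)) ≤ dist (c (n + 1)) q + dist (c (N + 1)) q :=
          dist_triangle_right _ _ _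
      _ < ε := by linarith
  obtain ⟨qlim, hqlim⟩ := cauchySeq_tendsto_of_complete hCauchy
  have hqlimJ : qlim ∈ J := hJcl.mem_of_tendsto hqlim (Filter.Eventually.of_forall fun n =>
    hmemc (n + 1) (by omega))
  have hinf0 : Metric.infDist qlim F = 0 := by
    refine le_antisymm ?_ Metric.infDist_nonneg
    refine le_of_forall_pos_le_add fun ε hε => ?_
    obtain ⟨N, hN1, hNd⟩ := hDto0 (ε / 2) (by positivity)
    have htd := Metric.tendsto_atTop.1 hqlim (ε / 2) (by positivity)
    obtain ⟨M, hM⟩ := htd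
    set n := max N M with hndef
    have h1 : dist qlim (c (n + 1)) < ε / 2 := by
      rw [dist_comm]
      exact hM n (le_max_right _ _)
    have h2 : Metric.infDist (c (n + 1)) F ≤ Metric.infDist (c N) F :=
      hDmono N (n + 1) hN1 (by omega)
    calc Metric.infDist qlim F ≤ Metric.infDist (c (n + 1)) F + dist qlim (c (n + 1)) :=
          Metric.infDist_le_infDist_add_dist
      _ ≤ 0 + ε := by linarith
  -- the limit is a fixed point
  have hfix : S qlim = qlim := by
    have hkey : ‖qlim - S qlim‖ = 0 := by
      refine le_antisymm ?_ (norm_nonneg _)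
      by_contra hcon
      push_neg at hcon
      obtain ⟨p, hpF, hpd⟩ := (Metric.infDist_lt_iff hFne').1
        (show Metric.infDist qlim F < ‖qlim - S qlim‖ / 2 by rw [hinf0]; positivity)
      have h1 : ‖qlim - S qlim‖ ≤ ‖qlim - p‖ + ‖S p - S qlim‖ := by
        have : qlim - S qlim = (qlim - p) + (S p - S qlim) := by rw [hpF.2]; abel
        rw [this]; exact norm_add_le _ _
      have h2 : ‖S p - S qlim‖ ≤ ‖p - qlim‖ := hS p hpF.1 qlim hqlimJ
      rw [dist_eq_norm] at hpd
      rw [norm_sub_rev (p : G)] at h2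
      linarith
    have h := sub_eq_zero.1 (norm_eq_zero.1 hkey)
    exact h.symm
  refine ⟨qlim, hqlimJ, hfix, ?_⟩
  exact (tendsto_add_atTop_iff_nat 1).1 hqlim
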